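/- Let A be a real n×n matrix, let λ ≥ 0 and ε > 0, and let P be a real symmetric n×n matrix with inertia p such that AᵀP + PA ⪯ −2λP − εI. Then the cone K⁻ = { x ∈ ℝⁿ : xᵀPx ≤ 0 } is forward invariant and strictly contracted under the linear flow: for every t ≥ 0 and every x with xᵀPx ≤ 0 one has (exp(At)x)ᵀP(exp(At)x) ≤ 0, and for every t > 0 and every x ≠ 0 with xᵀPx ≤ 0 one has (exp(At)x)ᵀP(exp(At)x) < 0. -/

import Mathlib

open Matrix

/-- `M ⪯ N` iff `N - M` is positive semidefinite. -/
def matLE {m : Type*} [Fintype m] (M N : Matrix m m ℝ) : Prop := (N - M).PosSemidef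

/-- A real symmetric matrix has inertia `p`: exactly `p` negative eigenvalues,
`card m − p` positive eigenvalues, and no zero eigenvalues, counted with multiplicity
(as roots of the characteristic polynomial). -/
def hasInertia {m : Type*} [Fintype m] [DecidableEq m]
    (P : Matrix m m ℝ) (p : ℕ) : Prop :=
  Multiset.countP (fun μ : ℝ => μ < 0) P.charpoly.roots = p ∧
  Multiset.countP (fun μ : ℝ => 0 < μ) P.charpoly.roots = Fintype.card m - p ∧
  (0 : ℝ) ∉ P.charpoly.roots

/-- Number of complex eigenvalues (with algebraic multiplicity) of a real matrix
with strictly positive real part. -/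
noncomputable def posReCount {m : Type*} [Fintype m] [DecidableEq m]
    (A : Matrix m m ℝ) : ℕ :=
  Multiset.countP (fun μ : ℂ => 0 < μ.re) (A.map Complex.ofReal).charpoly.roots

/-- Number of complex eigenvalues (with algebraic multiplicity) of a real matrix
with strictly negative real part. -/
noncomputable def negReCount {m : Type*} [Fintype m] [DecidableEq m]
    (A : Matrix m m ℝ) : ℕ :=
  Multiset.countP (fun μ : ℂ => μ.re < 0) (A.map Complex.ofReal).charpoly.roots

/-- The quadratic form `xᵀ P x`. -/
def quadForm {m : Type*} [Fintype m] (P : Matrix m m ℝ) (x : m → ℝ) : ℝ :=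
  x ⬝ᵥ P.mulVec x

/-- Euclidean norm on `m → ℝ`. -/
noncomputable def enorm {m : Type*} [Fintype m] (x : m → ℝ) : ℝ :=
  Real.sqrt (x ⬝ᵥ x)

/-- `J` is the Jacobian of `f`. -/
def IsJacobianOf {n : ℕ} (J : (Fin n → ℝ) → Matrix (Fin n) (Fin n) ℝ)
    (f : (Fin n → ℝ) → (Fin n → ℝ)) : Prop :=
  ∀ x, HasFDerivAt f (LinearMap.toContinuousLinearMap ((J x).mulVecLin)) x

open Matrix NormedSpace

noncomputable def appVecCLM {n : ℕ} (x : Fin n → ℝ) :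
    Matrix (Fin n) (Fin n) ℝ →L[ℝ] (Fin n → ℝ) :=
  LinearMap.toContinuousLinearMap
    { toFun := fun M => M *ᵥ x
      map_add' := fun M N => Matrix.add_mulVec M N x
      map_smul' := fun c M => Matrix.smul_mulVec c M x }

lemma hasDerivAt_dotAux {n : ℕ} {f g : ℝ → Fin n → ℝ} {f' g' : Fin n → ℝ} {t : ℝ}
    (hf : HasDerivAt f f' t) (hg : HasDerivAt g g' t) :
    HasDerivAt (fun s => f s ⬝ᵥ g s) (f' ⬝ᵥ g t + f t ⬝ᵥ g') t := by
  have h : ∀ i : Fin n, HasDerivAt (fun s => f s i * g s i)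
      (f' i * g t i + f t i * g' i) t := fun i => by
    have hfi : HasDerivAt (fun s => f s i) (f' i) t :=
      (ContinuousLinearMap.proj (R := ℝ) (φ := fun _ : Fin n => ℝ) i).hasFDerivAt.comp_hasDerivAt t hf
    have hgi : HasDerivAt (fun s => g s i) (g' i) t :=
      (ContinuousLinearMap.proj (R := ℝ) (φ := fun _ : Fin n => ℝ) i).hasFDerivAt.comp_hasDerivAt t hg
    exact hfi.mul hgi
  have := HasDerivAt.fun_sum (fun i (_ : i ∈ Finset.univ) => h i)
  simpa [dotProduct, Finset.sum_add_distrib] using this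

lemma hasDerivAt_expVec {n : ℕ} (A : Matrix (Fin n) (Fin n) ℝ) (x : Fin n → ℝ) (t : ℝ) :
    HasDerivAt (fun u : ℝ => exp (u • A) *ᵥ x) (A *ᵥ (exp (t • A) *ᵥ x)) t := by
  letI : SeminormedRing (Matrix (Fin n) (Fin n) ℝ) := Matrix.linftyOpSemiNormedRing
  letI : NormedRing (Matrix (Fin n) (Fin n) ℝ) := Matrix.linftyOpNormedRing
  letI : NormedAlgebra ℝ (Matrix (Fin n) (Fin n) ℝ) := Matrix.linftyOpNormedAlgebra
  have hE := hasDerivAt_exp_smul_const' (𝕂 := ℝ) A t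
  have h2 := (appVecCLM x).hasFDerivAt.comp_hasDerivAt t hE
  rw [Matrix.mulVec_mulVec]; exact h2

lemma expAt_mulVec_ne_zero {n : ℕ} (A : Matrix (Fin n) (Fin n) ℝ) (t : ℝ)
    {x : Fin n → ℝ} (hx : x ≠ 0) : (exp (t • A)) *ᵥ x ≠ 0 := by
  intro h
  obtain ⟨U, hU⟩ := Matrix.isUnit_exp (t • A)
  apply hx
  calc x = ((↑U⁻¹ : Matrix (Fin n) (Fin n) ℝ) * (↑U : Matrix (Fin n) (Fin n) ℝ)) *ᵥ x := by
        rw [Units.inv_mul, Matrix.one_mulVec]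
    _ = (↑U⁻¹ : Matrix (Fin n) (Fin n) ℝ) *ᵥ ((↑U : Matrix (Fin n) (Fin n) ℝ) *ᵥ x) := by
        rw [Matrix.mulVec_mulVec]
    _ = 0 := by rw [hU, h, Matrix.mulVec_zero]

lemma quadIdentity {n : ℕ} (A P : Matrix (Fin n) (Fin n) ℝ) (u : Fin n → ℝ) :
    (A *ᵥ u) ⬝ᵥ (P *ᵥ u) + u ⬝ᵥ (P *ᵥ (A *ᵥ u)) = u ⬝ᵥ ((Aᵀ * P + P * A) *ᵥ u) := by
  rw [Matrix.add_mulVec, dotProduct_add, ← Matrix.mulVec_mulVec, ← Matrix.mulVec_mulVec]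
  congr 1
  rw [← Matrix.transpose_transpose A, Matrix.mulVec_transpose]
  simp [Matrix.dotProduct_mulVec, Matrix.vecMul_vecMul]



/-- the cone K⁻ = {x : xᵀPx ≤ 0} is forward invariant and strictly
contracted by the linear flow exp(At). -/
theorem cone_Kminus_forward_invariant {n : ℕ}
    (A P : Matrix (Fin n) (Fin n) ℝ) (p : ℕ) (lam eps : ℝ)
    (hlam : 0 ≤ lam) (heps : 0 < eps)
    (hPsymm : P.IsSymm) (hPinertia : hasInertia P p)
    (hLMI : matLE (Aᵀ * P + P * A)
      (-((2 * lam) • P) - eps • (1 : Matrix (Fin n) (Fin n) ℝ))) :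
    (∀ t : ℝ, 0 ≤ t → ∀ x : Fin n → ℝ, quadForm P x ≤ 0 →
      quadForm P ((NormedSpace.exp (t • A)).mulVec x) ≤ 0) ∧
    (∀ t : ℝ, 0 < t → ∀ x : Fin n → ℝ, x ≠ 0 → quadForm P x ≤ 0 →
      quadForm P ((NormedSpace.exp (t • A)).mulVec x) < 0) := by

  -- main argument
  classical
  set M : Matrix (Fin n) (Fin n) ℝ := Aᵀ * P + P * A with hM
  have key : ∀ x : Fin n → ℝ, quadForm P x ≤ 0 →
      (∀ t : ℝ, 0 ≤ t → quadForm P ((exp (t • A)) *ᵥ x) ≤ 0) ∧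
      (x ≠ 0 → ∀ t : ℝ, 0 < t → quadForm P ((exp (t • A)) *ᵥ x) < 0) := by
    intro x hx0
    set y : ℝ → Fin n → ℝ := fun s => exp (s • A) *ᵥ x with hy
    set V : ℝ → ℝ := fun s => y s ⬝ᵥ P *ᵥ y s with hV
    set W : ℝ → ℝ := fun s => Real.exp (2 * lam * s) * V s with hW
    set W' : ℝ → ℝ := fun s =>
      Real.exp (2 * lam * s) * (2 * lam) * V s
        + Real.exp (2 * lam * s) * (y s ⬝ᵥ M *ᵥ y s) with hW'
    have hy0 : y 0 = x := by simp [hy]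
    have hV0 : V 0 = quadForm P x := by rw [hV]; simp [hy0]; rfl
    have hyder : ∀ s, HasDerivAt y (A *ᵥ y s) s := fun s => hasDerivAt_expVec A x s
    have hVder : ∀ s, HasDerivAt V (y s ⬝ᵥ M *ᵥ y s) s := by
      intro s
      have hg : HasDerivAt (fun u => P *ᵥ y u) (P *ᵥ (A *ᵥ y s)) s := by
        have := (LinearMap.toContinuousLinearMap
          P.mulVecLin).hasFDerivAt.comp_hasDerivAt s (hyder s)
        simpa [Function.comp_def] using this
      have := hasDerivAt_dotAux (hyder s) hg
      rwa [quadIdentity A P (y s), ← hM] at this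
    have hWder : ∀ s, HasDerivAt W (W' s) s := by
      intro s
      have h1 : HasDerivAt (fun u : ℝ => 2 * lam * u) (2 * lam) s := by
        simpa using (hasDerivAt_id s).const_mul (2 * lam)
      have he : HasDerivAt (fun u : ℝ => Real.exp (2 * lam * u))
          (Real.exp (2 * lam * s) * (2 * lam)) s := h1.exp
      have := he.mul (hVder s)
      simpa [hW, hW', Pi.mul_def] using this
    have hLMIq : ∀ v : Fin n → ℝ,
        v ⬝ᵥ M *ᵥ v ≤ -(2 * lam) * (v ⬝ᵥ P *ᵥ v) - eps * (v ⬝ᵥ v) := by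
      intro v
      have h := hLMI.dotProduct_mulVec_nonneg v
      rw [star_trivial] at h
      have hexp : v ⬝ᵥ ((-((2 * lam) • P) - eps • (1 : Matrix (Fin n) (Fin n) ℝ) - M) *ᵥ v)
          = -(2 * lam) * (v ⬝ᵥ P *ᵥ v) - eps * (v ⬝ᵥ v) - v ⬝ᵥ M *ᵥ v := by
        simp [Matrix.sub_mulVec, Matrix.neg_mulVec, Matrix.smul_mulVec,
          Matrix.one_mulVec, dotProduct_sub, dotProduct_neg,
          dotProduct_smul, smul_eq_mul]
      rw [hexp] at h
      linarith
    have hyy_nonneg : ∀ s, 0 ≤ y s ⬝ᵥ y s := fun s =>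
      Finset.sum_nonneg fun i _ => mul_self_nonneg _
    have hW'le : ∀ s, W' s ≤ -(eps * Real.exp (2 * lam * s) * (y s ⬝ᵥ y s)) := by
      intro s
      have h1 := hLMIq (y s)
      have h2 := Real.exp_pos (2 * lam * s)
      have hval : W' s = Real.exp (2 * lam * s) * (2 * lam) * V s
          + Real.exp (2 * lam * s) * (y s ⬝ᵥ M *ᵥ y s) := rfl
      rw [hval]
      have h3 := mul_le_mul_of_nonneg_left h1 h2.le
      nlinarith [h3]
    constructor
    · -- nonstrict
      intro t ht
      have hanti : Antitone W := by
        refine antitone_of_hasDerivAt_nonpos hWder fun s => ?_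
        show W' s ≤ 0
        refine le_trans (hW'le s) ?_
        have h2 := (Real.exp_pos (2 * lam * s)).le
        have h3 := mul_nonneg (mul_nonneg heps.le h2) (hyy_nonneg s)
        linarith
      have hWt : W t ≤ W 0 := hanti ht
      have hW0 : W 0 = quadForm P x := by simp [hW, hV0]
      have hexpos := Real.exp_pos (2 * lam * t)
      have : Real.exp (2 * lam * t) * V t ≤ 0 := by
        rw [← hW0] at hx0; exact le_trans hWt hx0
      have hVt : V t ≤ 0 := by nlinarith
      exact hVt
    · -- strict
      intro hxne t ht
      have hanti : StrictAnti W := by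
        refine strictAnti_of_hasDerivAt_neg hWder fun s => ?_
        have hyne : y s ≠ 0 := expAt_mulVec_ne_zero A s hxne
        have hypos : 0 < y s ⬝ᵥ y s :=
          lt_of_le_of_ne (hyy_nonneg s)
            (Ne.symm (fun h => hyne (dotProduct_self_eq_zero.mp h)))
        have h2 := Real.exp_pos (2 * lam * s)
        refine lt_of_le_of_lt (hW'le s) ?_
        have : 0 < eps * Real.exp (2 * lam * s) * (y s ⬝ᵥ y s) := by positivity
        linarith
      have hWt : W t < W 0 := hanti ht
      have hW0 : W 0 = quadForm P x := by simp [hW, hV0]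
      have hexpos := Real.exp_pos (2 * lam * t)
      have : Real.exp (2 * lam * t) * V t < 0 := by
        rw [← hW0] at hx0; exact lt_of_lt_of_le hWt hx0
      have hVt : V t < 0 := by nlinarith
      exact hVt
  constructor
  · intro t ht x hx
    exact ((key x hx).1 t ht)
  · intro t ht x hxne hx
    exact ((key x hx).2 hxne t ht)
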